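/- For every natural number N ≥ 1, the set {λ ∈ ℝ : λ > 0 and det(−A_N(λ)) = 0} is nonempty; that is, there exists a positive value of the birth rate λ for which 0 is an eigenvalue of A_N(λ). -/

import Mathlib

open Matrix Polynomial Filter

/-- The (N+1)×(N+1) matrix A_N(λ): diagonal −1, entry (0,1) equal to 2λ,
entries λ on the other super/sub-diagonal positions, 0 elsewhere. -/
noncomputable def matA (lam : ℝ) (N : ℕ) : Matrix (Fin (N + 1)) (Fin (N + 1)) ℝ :=
  Matrix.of fun j k =>
    if j = k then -1
    else if (j : ℕ) = 0 ∧ (k : ℕ) = 1 then 2 * lam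
    else if (j : ℕ) + 1 = (k : ℕ) ∨ (k : ℕ) + 1 = (j : ℕ) then lam
    else 0

/-- The (N+1)×(N+1) matrix C_N: zero diagonal, entry (0,1) equal to 2,
entries 1 on the other super/sub-diagonal positions, 0 elsewhere;
so that A_N(λ) = −I + λ·C_N. -/
noncomputable def matC (N : ℕ) : Matrix (Fin (N + 1)) (Fin (N + 1)) ℝ :=
  Matrix.of fun j k =>
    if j = k then 0
    else if (j : ℕ) = 0 ∧ (k : ℕ) = 1 then 2
    else if (j : ℕ) + 1 = (k : ℕ) ∨ (k : ℕ) + 1 = (j : ℕ) then 1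
    else 0


-- Auxiliary definitions and lemmas -------------------------------------------

/-- Symmetrized version of `matC`. -/
noncomputable def matS (N : ℕ) : Matrix (Fin (N + 1)) (Fin (N + 1)) ℝ :=
  Matrix.of fun j k => Real.sqrt (matC N j k * matC N k j)

/-- Diagonal conjugating `matC` to `matS`. -/
noncomputable def dvec (N : ℕ) : Fin (N + 1) → ℝ :=
  fun j => if (j : ℕ) = 0 then 1 else Real.sqrt 2

lemma matS_herm (N : ℕ) : (matS N).IsHermitian := by
  ext j k
  simp [matS, conjTranspose_apply, mul_comm]

lemma key_sim (N : ℕ) : diagonal (dvec N) * matC N = matS N * diagonal (dvec N) := by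
  ext j k
  rw [diagonal_mul, mul_diagonal]
  simp only [matS, matC, dvec, of_apply, Fin.ext_iff]
  have h2 : Real.sqrt 2 * Real.sqrt 2 = 2 := Real.mul_self_sqrt (by norm_num)
  split_ifs <;> first
    | omega
    | norm_num

lemma trace_matS (N : ℕ) : (matS N).trace = 0 := by
  simp [Matrix.trace, Matrix.diag, matS, matC]

lemma matA_neg_eq (N : ℕ) (μ : ℝ) (hμ : μ ≠ 0) :
    -(matA μ⁻¹ N) = μ⁻¹ • (μ • (1 : Matrix (Fin (N+1)) (Fin (N+1)) ℝ) - matC N) := by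
  ext j k
  simp only [Matrix.neg_apply, matA, matC, of_apply, Matrix.smul_apply, Matrix.sub_apply, one_apply, smul_eq_mul]
  split_ifs <;> field_simp <;> ring

lemma sum_eig (N : ℕ) : ∑ i, (matS_herm N).eigenvalues i = 0 := by
  have hst := (matS_herm N).spectral_theorem
  have h1 := congrArg Matrix.trace hst
  rw [Unitary.conjStarAlgAut_apply, Matrix.trace_mul_cycle] at h1
  rw [(Matrix.mem_unitaryGroup_iff').mp (Matrix.IsHermitian.eigenvectorUnitary (matS_herm N)).2,
    one_mul, Matrix.trace_diagonal] at h1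
  simpa [trace_matS N, Function.comp] using h1.symm

lemma exists_pos_eig (N : ℕ) (hN : 1 ≤ N) : ∃ i, 0 < (matS_herm N).eigenvalues i := by
  by_contra h
  push_neg at h
  have hall : ∀ i, (matS_herm N).eigenvalues i = 0 := fun i =>
    Finset.sum_eq_zero_iff_of_nonpos (fun i _ => h i) |>.mp (sum_eig N) i (Finset.mem_univ i)
  have hS0 : matS N = 0 := by
    have hst := (matS_herm N).spectral_theorem
    simp only [funext hall] at hst
    simpa using hst
  have h01 : matS N 0 ⟨1, by omega⟩ = Real.sqrt 2 := by
    simp only [matS, matC, of_apply]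
    norm_num [Fin.ext_iff]
  rw [hS0] at h01
  simp at h01
  exact absurd h01.symm (by positivity)

lemma det_sub_eig (N : ℕ) (i : Fin (N+1)) :
    ((matS_herm N).eigenvalues i • (1 : Matrix (Fin (N+1)) (Fin (N+1)) ℝ) - matS N).det = 0 := by
  have hmem := (matS_herm N).eigenvalues_mem_spectrum_real (𝕜 := ℝ) i
  rw [spectrum.mem_iff, Algebra.algebraMap_eq_smul_one] at hmem
  by_contra hdet
  exact hmem ((Matrix.isUnit_iff_isUnit_det _).mpr (isUnit_iff_ne_zero.mpr hdet))

/-- The critical value λ_c(N) = inf {λ > 0 : det(−A_N(λ)) = 0}. -/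
noncomputable def lamCrit (N : ℕ) : ℝ :=
  sInf {lam : ℝ | 0 < lam ∧ (-(matA lam N)).det = 0}

/-- For every N ≥ 1 there is a positive birth rate λ for which 0 is an
eigenvalue of A_N(λ), i.e. det(−A_N(λ)) = 0. -/
theorem exists_pos_root (N : ℕ) (hN : 1 ≤ N) :
    {lam : ℝ | 0 < lam ∧ (-(matA lam N)).det = 0}.Nonempty := by
  obtain ⟨i, hi⟩ := exists_pos_eig N hN
  set μ := (matS_herm N).eigenvalues i with hμdef
  have hμ : μ ≠ 0 := ne_of_gt hi
  refine ⟨μ⁻¹, by positivity, ?_⟩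
  have hdetS := det_sub_eig N i
  have hd : ∀ j, dvec N j ≠ 0 := by
    intro j
    simp only [dvec]
    split_ifs <;> positivity
  have hsim : diagonal (dvec N) * (μ • (1 : Matrix (Fin (N+1)) (Fin (N+1)) ℝ) - matC N)
      = (μ • (1 : Matrix (Fin (N+1)) (Fin (N+1)) ℝ) - matS N) * diagonal (dvec N) := by
    rw [Matrix.mul_sub, Matrix.sub_mul, Matrix.mul_smul, Matrix.smul_mul, mul_one, one_mul,
      key_sim]
  have hdetC : (μ • (1 : Matrix (Fin (N+1)) (Fin (N+1)) ℝ) - matC N).det = 0 := by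
    have h := congrArg Matrix.det hsim
    rw [Matrix.det_mul, Matrix.det_mul, hdetS, zero_mul, Matrix.det_diagonal] at h
    exact (mul_eq_zero.mp h).resolve_left (Finset.prod_ne_zero_iff.mpr fun j _ => hd j)
  rw [matA_neg_eq N μ hμ, Matrix.det_smul, hdetC, mul_zero]
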